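/- Let n ≥ 3 and work in the 2n×2n complex matrices. Set x = E 1 1 - E 2 2 - E (n+1) (n+1) + E (n+2) (n+2), y = E 1 2, and z = E 1 (n+2) + E 2 (n+1). If λ ∈ ℂ satisfies ⁅x, ⁅y, z⁆⁆ + ⁅y, ⁅z, x⁆⁆ + λ • ⁅z, ⁅x, y⁆⁆ = 0, then λ = 1. (This is the graded Hom-Jacobi identity for the automorphism ȷ(λ) of the periplectic Lie superalgebra P(n-1) evaluated at the even elements x, y and the odd element z, and it forces ȷ(λ) = id.) -/

import Mathlib

open Matrix

/-- The Hom-Jacobi identity for `ȷ(λ)` on the periplectic Lie superalgebra `P(n-1)` at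
the even elements `x = E 1 1 - E 2 2 - E (n+1) (n+1) + E (n+2) (n+2)`, `y = E 1 2` and
the odd element `z = E 1 (n+2) + E 2 (n+1)` (1-based indexing) forces `λ = 1`. -/
theorem jmap_homJacobi_periplectic_forces_lambda_eq_one (n : ℕ) (hn : 3 ≤ n) (l : ℂ)
    (x y z : Matrix (Fin (2 * n)) (Fin (2 * n)) ℂ)
    (hx : x = Matrix.single ⟨0, by omega⟩ ⟨0, by omega⟩ (1 : ℂ) -
              Matrix.single ⟨1, by omega⟩ ⟨1, by omega⟩ (1 : ℂ) -
              Matrix.single ⟨n, by omega⟩ ⟨n, by omega⟩ (1 : ℂ) +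
              Matrix.single ⟨n + 1, by omega⟩ ⟨n + 1, by omega⟩ (1 : ℂ))
    (hy : y = Matrix.single ⟨0, by omega⟩ ⟨1, by omega⟩ (1 : ℂ))
    (hz : z = Matrix.single ⟨0, by omega⟩ ⟨n + 1, by omega⟩ (1 : ℂ) +
              Matrix.single ⟨1, by omega⟩ ⟨n, by omega⟩ (1 : ℂ))
    (h : ⁅x, ⁅y, z⁆⁆ + ⁅y, ⁅z, x⁆⁆ + l • ⁅z, ⁅x, y⁆⁆ = 0) :
    l = 1 := by
  have e1 : (1:ℕ) ≠ 0 := by omega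
  have e2 : n ≠ 0 := by omega
  have e3 : n ≠ 1 := by omega
  have e4 : n + 1 ≠ 0 := by omega
  have e5 : n + 1 ≠ 1 := by omega
  have e6 : n + 1 ≠ n := by omega
  have e7 : n ≠ n + 1 := by omega
  have e8 : (0:ℕ) ≠ 1 := by omega
  have e9 : (0:ℕ) ≠ n := by omega
  have e10 : (1:ℕ) ≠ n := by omega
  have e11 : (0:ℕ) ≠ n + 1 := by omega
  have e12 : (1:ℕ) ≠ n + 1 := by omega
  subst hx hy hz
  simp only [Ring.lie_def, mul_sub, sub_mul, mul_add, add_mul, smul_sub, smul_add,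
    Matrix.single_mul_single_same, Matrix.single_mul_single_of_ne, ne_eq, Fin.mk.injEq,
    e1, e2, e3, e4, e5, e6, e7, e8, e9, e10, e11, e12, not_false_eq_true,
    mul_one, one_mul, zero_mul, mul_zero, sub_zero, zero_sub, add_zero, zero_add,
    smul_zero, smul_neg, neg_zero, sub_neg_eq_add, neg_neg] at h
  replace h := congrFun (congrFun h ⟨0, by omega⟩) ⟨n, by omega⟩
  simp only [Matrix.add_apply, Matrix.sub_apply, Matrix.neg_apply, Matrix.smul_apply,
    Matrix.zero_apply, Matrix.single_apply_same, smul_eq_mul, mul_one] at h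
  linear_combination -h / 2
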